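/- Let P be a parallelogram polyomino and let F = {A_1, …, A_d} be a set of d non-attacking rooks on P. Then there exists a set G = {B_1, …, B_d} of d non-attacking rooks on P with lower-left corners ℓ(B_k) = (i_k, j_k) satisfying i_1 < i_2 < … < i_d and j_1 < j_2 < … < j_d, such that F ∼ G (F and G are equivalent under switches). -/
import Mathlib


open scoped Classical

/-- Lattice points of `ℕ²`; a cell is identified with its lower-left corner. -/
abbrev Pt : Type := ℕ × ℕ

/-- The four vertices (corners) of the unit cell with lower-left corner `a`. -/
def cellVerts (a : Pt) : Finset Pt :=
  {a, (a.1 + 1, a.2), (a.1, a.2 + 1), (a.1 + 1, a.2 + 1)}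

/-- The vertex set `V(P)` of a collection of cells. -/
def vertexSet (P : Finset Pt) : Finset Pt := P.biUnion cellVerts

/-- Two cells share an edge. -/
def cellAdj (a b : Pt) : Prop :=
  (a.1 = b.1 ∧ (a.2 = b.2 + 1 ∨ b.2 = a.2 + 1)) ∨
  (a.2 = b.2 ∧ (a.1 = b.1 + 1 ∨ b.1 = a.1 + 1))

/-- Any two cells of `S` are joined by a sequence of edge-adjacent cells of `S`. -/
def CellConnected (S : Set Pt) : Prop :=
  ∀ a ∈ S, ∀ b ∈ S,
    Relation.ReflTransGen (fun x y => cellAdj x y ∧ x ∈ S ∧ y ∈ S) a b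

/-- A polyomino: a nonempty, edge-connected finite collection of cells. -/
def IsPolyomino (P : Finset Pt) : Prop :=
  P.Nonempty ∧ CellConnected (↑P : Set Pt)

/-- A simple polyomino: the cells of `ℕ²` outside of `P` are also edge-connected. -/
def IsSimplePolyomino (P : Finset Pt) : Prop :=
  IsPolyomino P ∧ CellConnected ((↑P : Set Pt)ᶜ)

/-- The cells of the interval `[a, b]` of `ℕ²`. -/
def intervalCells (a b : Pt) : Finset Pt :=
  Finset.Ico a.1 b.1 ×ˢ Finset.Ico a.2 b.2

/-- `[a, b]` is a proper interval all of whose cells belong to `P`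
(an inner interval, also called a rectangle of `P`). -/
def IsInnerInterval (P : Finset Pt) (a b : Pt) : Prop :=
  a.1 < b.1 ∧ a.2 < b.2 ∧ intervalCells a b ⊆ P

/-- The ideal of inner 2-minors of a collection of cells `P`, in the polynomial
ring whose variables are indexed by a finite vertex set `V`. -/
noncomputable def innerMinorIdeal (K : Type*) [Field K] (V P : Finset Pt) :
    Ideal (MvPolynomial {v : Pt // v ∈ V} K) :=
  Ideal.span { f | ∃ a b c d : {v : Pt // v ∈ V},
    IsInnerInterval P a.1 b.1 ∧
    c.1 = ((a.1).1, (b.1).2) ∧ d.1 = ((b.1).1, (a.1).2) ∧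
    f = MvPolynomial.X a * MvPolynomial.X b - MvPolynomial.X c * MvPolynomial.X d }

/-- The polyomino ideal `I_P ⊆ K[x_v : v ∈ V(P)]`. -/
noncomputable def polyoIdeal (K : Type*) [Field K] (P : Finset Pt) :
    Ideal (MvPolynomial {v : Pt // v ∈ vertexSet P} K) :=
  innerMinorIdeal K (vertexSet P) P

/-- The join-meet ideal of a finite sublattice `L` of `ℕ²`. -/
noncomputable def joinMeetIdeal (K : Type*) [Field K] (L : Finset Pt) :
    Ideal (MvPolynomial {v : Pt // v ∈ L} K) :=
  Ideal.span { f | ∃ a b c d : {v : Pt // v ∈ L},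
    ¬ a.1 ≤ b.1 ∧ ¬ b.1 ≤ a.1 ∧ c.1 = a.1 ⊔ b.1 ∧ d.1 = a.1 ⊓ b.1 ∧
    f = MvPolynomial.X a * MvPolynomial.X b - MvPolynomial.X c * MvPolynomial.X d }

/-- A saturated chain in `L` from `a` to `b` whose consecutive elements differ by
`(1,0)` or `(0,1)`. -/
def UnitChain (L : Finset Pt) (a b : Pt) : Prop :=
  ∃ (k : ℕ) (c : ℕ → Pt), c 0 = a ∧ c k = b ∧ (∀ i ≤ k, c i ∈ L) ∧
    ∀ i < k, c (i + 1) = c i + (1, 0) ∨ c (i + 1) = c i + (0, 1)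

/-- The rank of a finite sublattice of `ℕ²` (whose minimum is `(0,0)`). -/
def latRank (L : Finset Pt) : ℕ := L.sup fun a => a.1 + a.2

/-- A simple planar distributive lattice: a finite sublattice of `ℕ²` containing
`(0,0)`, in which any two comparable elements are joined by a saturated chain of unit
steps, and having at least two elements in each intermediate rank. -/
def IsSPDL (L : Finset Pt) : Prop :=
  (0, 0) ∈ L ∧
  (∀ a ∈ L, ∀ b ∈ L, a ⊔ b ∈ L ∧ a ⊓ b ∈ L) ∧
  (∀ a ∈ L, ∀ b ∈ L, a ≤ b → UnitChain L a b) ∧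
  ∀ r : ℕ, 0 < r → r < latRank L → 2 ≤ (L.filter fun a => a.1 + a.2 = r).card

/-- The cells all of whose four vertices lie in `L`. -/
def cellsOf (L : Finset Pt) : Finset Pt := L.filter fun a => cellVerts a ⊆ L

/-- A north-east lattice path of length `k` starting at the origin. -/
def IsNEPath (k : ℕ) (f : ℕ → Pt) : Prop :=
  f 0 = (0, 0) ∧ ∀ i < k, f (i + 1) = f i + (1, 0) ∨ f (i + 1) = f i + (0, 1)

/-- `P` is the parallelogram polyomino bounded above by the path `u` and below by
the path `l`, both of length `k`, meeting only at their endpoints. -/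
def ParaData (P : Finset Pt) (k : ℕ) (u l : ℕ → Pt) : Prop :=
  0 < k ∧ IsNEPath k u ∧ IsNEPath k l ∧ u k = l k ∧
  (∀ i ≤ k, (u i).1 ≤ (l i).1) ∧
  (∀ i, 0 < i → i < k → u i ≠ l i) ∧
  P.Nonempty ∧
  ∀ c : Pt, c ∈ P ↔
    ∀ v ∈ cellVerts c, v.1 + v.2 ≤ k ∧ (u (v.1 + v.2)).1 ≤ v.1 ∧ v.1 ≤ (l (v.1 + v.2)).1

/-- A parallelogram polyomino. -/
def IsParaPoly (P : Finset Pt) : Prop := ∃ k u l, ParaData P k u l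

/-- `F` is a set of non-attacking rooks on `P`. -/
def NonAttacking (P : Finset Pt) (F : Finset Pt) : Prop :=
  F ⊆ P ∧ ∀ a ∈ F, ∀ b ∈ F, a ≠ b → a.1 ≠ b.1 ∧ a.2 ≠ b.2

/-- A switch: inside a rectangle `[a,b]` of `P`, replace the diagonal pair of cells by
the antidiagonal pair, or vice versa. -/
def SwitchStep (P : Finset Pt) (F G : Finset Pt) : Prop :=
  ∃ a b : Pt, IsInnerInterval P a b ∧
    ((a ∈ F ∧ (b.1 - 1, b.2 - 1) ∈ F ∧
       G = F \ {a, (b.1 - 1, b.2 - 1)} ∪ {(a.1, b.2 - 1), (b.1 - 1, a.2)}) ∨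
     ((a.1, b.2 - 1) ∈ F ∧ (b.1 - 1, a.2) ∈ F ∧
       G = F \ {(a.1, b.2 - 1), (b.1 - 1, a.2)} ∪ {a, (b.1 - 1, b.2 - 1)}))

/-- The number `|R̃_k|` of equivalence classes (under finitely many switches) of sets of
`k` non-attacking rooks on `P`. -/
noncomputable def rtilde (P : Finset Pt) (k : ℕ) : ℕ :=
  Nat.card (Quot fun F G : {F : Finset Pt // NonAttacking P F ∧ F.card = k} =>
    SwitchStep P F.1 G.1)

/-- The rook number `r(P)`: the maximum number of non-attacking rooks on `P`. -/
noncomputable def rookNum (P : Finset Pt) : ℕ :=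
  (P.powerset.filter fun F => NonAttacking P F).sup Finset.card

/-- The Hilbert function of `K[P] = K[x_v : v ∈ V(P)]/I_P`. -/
noncomputable def hilbertFn (K : Type*) [Field K] (P : Finset Pt) (k : ℕ) : ℕ :=
  Module.finrank K
    ↥(Submodule.map (Ideal.Quotient.mkₐ K (polyoIdeal K P)).toLinearMap
      (MvPolynomial.homogeneousSubmodule {v : Pt // v ∈ vertexSet P} K k))

/-- The Hilbert–Poincaré series of `K[P]`, as a formal power series over `ℤ`. -/
noncomputable def hilbertSeries (K : Type*) [Field K] (P : Finset Pt) : PowerSeries ℤ :=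
  PowerSeries.mk fun k => (hilbertFn K P k : ℤ)

/-- `[a,b]` is a maximal rectangle of `P`. -/
def MaximalRect (P : Finset Pt) (a b : Pt) : Prop :=
  IsInnerInterval P a b ∧
  ∀ a' b', IsInnerInterval P a' b' → a' ≤ a → b ≤ b' → a' = a ∧ b' = b

/-- The rectangle `[sa,sb]` of `P` is a single rectangle whose unique maximal rectangle
is `[ra,rb]`: it is contained in `[ra,rb]` and shares no cell with any other maximal
rectangle of `P`. -/
def SingleRectOf (P : Finset Pt) (ra rb sa sb : Pt) : Prop :=
  IsInnerInterval P sa sb ∧ ra ≤ sa ∧ sb ≤ rb ∧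
  ∀ ra' rb', MaximalRect P ra' rb' → ¬(ra' = ra ∧ rb' = rb) →
    ∀ c ∈ intervalCells sa sb, c ∉ intervalCells ra' rb'

/-- `P` has the S-property: every maximal rectangle of `P` has a unique single square. -/
def HasSProperty (P : Finset Pt) : Prop :=
  ∀ ra rb, MaximalRect P ra rb →
    ∃! s : Pt × Pt,
      SingleRectOf P ra rb s.1 s.2 ∧ s.2.1 - s.1.1 = s.2.2 - s.1.2

/-- `P` is shortenable: removing the unique maximal rectangle `R₀` containing `(0,0)`
leaves (up to translation) a parallelogram polyomino. -/
def Shortenable (P : Finset Pt) : Prop :=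
  ∃ b₀, MaximalRect P (0, 0) b₀ ∧
    ∃ (w : Pt) (Q : Finset Pt), IsParaPoly Q ∧
      P \ intervalCells (0, 0) b₀ = Q.image fun c => c + w

/-- `P` is well-shortenable: it is shortenable, and `P ∖ R₀` is (up to translation)
either a rectangle or again a well-shortenable parallelogram polyomino. -/
inductive WellShortenable : Finset Pt → Prop
  | base (P : Finset Pt) (b₀ : Pt) (hmax : MaximalRect P (0, 0) b₀)
      (w : Pt) (Q : Finset Pt) (hQ : IsParaPoly Q)
      (heq : P \ intervalCells (0, 0) b₀ = Q.image fun c => c + w)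
      (hrect : ∃ a b : Pt, Q = intervalCells a b) : WellShortenable P
  | step (P : Finset Pt) (b₀ : Pt) (hmax : MaximalRect P (0, 0) b₀)
      (w : Pt) (Q : Finset Pt) (hQ : IsParaPoly Q)
      (heq : P \ intervalCells (0, 0) b₀ = Q.image fun c => c + w)
      (hws : WellShortenable Q) : WellShortenable P

/-- `a` is a join-irreducible element of the finite lattice `L ⊆ ℕ²`
(whose minimum is `(0,0)`). -/
def JoinIrred (L : Finset Pt) (a : Pt) : Prop :=
  a ∈ L ∧ a ≠ (0, 0) ∧ ∀ b ∈ L, ∀ c ∈ L, a = b ⊔ c → a = b ∨ a = c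

/-- `c` is a maximal chain of the subposet `J` of `ℕ²`. -/
def MaxChainIn (J : Set Pt) (c : Set Pt) : Prop :=
  c ⊆ J ∧ IsChain (· ≤ ·) c ∧
  ∀ c', c' ⊆ J → IsChain (· ≤ ·) c' → c ⊆ c' → c = c'

/-- The subposet `J` of `ℕ²` is pure: all its maximal chains have the same length. -/
def PurePoset (J : Set Pt) : Prop :=
  ∀ c₁ c₂, MaxChainIn J c₁ → MaxChainIn J c₂ → c₁.ncard = c₂.ncard

/-- A maximal chain of a simple planar distributive lattice `L`, viewed as a monotone
lattice path of unit steps from `(0,0)` to `max L`. -/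
def IsMaxLatticeChain (L : Finset Pt) (N : ℕ) (c : ℕ → Pt) : Prop :=
  c 0 = (0, 0) ∧ (∀ i ≤ N, c i ∈ L) ∧ (∀ a ∈ L, a ≤ c N) ∧
  ∀ i < N, c (i + 1) = c i + (1, 0) ∨ c (i + 1) = c i + (0, 1)

/-- The chain `c` has a descent at the cell with lower-left corner `a`. -/
def DescentCell (L : Finset Pt) (N : ℕ) (c : ℕ → Pt) (a : Pt) : Prop :=
  cellVerts a ⊆ L ∧
  ∃ s, s + 2 ≤ N ∧ c s = a ∧ c (s + 1) = (a.1 + 1, a.2) ∧ c (s + 2) = (a.1 + 1, a.2 + 1)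

/-- The `i`-th step of the path `f` is a north step. -/
def NorthStep (f : ℕ → Pt) (i : ℕ) : Prop := f (i + 1) = f i + (0, 1)

/-- The `i`-th step of the path `f` is an east step. -/
def EastStep (f : ℕ → Pt) (i : ℕ) : Prop := f (i + 1) = f i + (1, 0)

/-- `[i, i+c)` is a maximal run of steps satisfying `Q` in a path of length `k`. -/
def MaxRun (Q : ℕ → Prop) (k i c : ℕ) : Prop :=
  0 < c ∧ i + c ≤ k ∧ (∀ j, i ≤ j → j < i + c → Q j) ∧
  (i = 0 ∨ ¬ Q (i - 1)) ∧ (i + c = k ∨ ¬ Q (i + c))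

/-- The `i`-th step of the 2-colored Motzkin path associated to the pair of paths
`(u, l)` is a rise step. -/
def RiseStep (u l : ℕ → Pt) (i : ℕ) : Prop := NorthStep u i ∧ EastStep l i

/-- Fall step of the associated 2-colored Motzkin path. -/
def FallStep (u l : ℕ → Pt) (i : ℕ) : Prop := EastStep u i ∧ NorthStep l i

/-- `α`-colored horizontal step of the associated 2-colored Motzkin path. -/
def AlphaStep (u l : ℕ → Pt) (i : ℕ) : Prop := NorthStep u i ∧ NorthStep l i

/-- `β`-colored horizontal step of the associated 2-colored Motzkin path. -/
def BetaStep (u l : ℕ → Pt) (i : ℕ) : Prop := EastStep u i ∧ EastStep l i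

/-- Row convexity of a collection of cells. -/
def RowConvex (P : Finset Pt) : Prop :=
  ∀ i j k : ℕ, (i, j) ∈ P → (k, j) ∈ P → ∀ l, i ≤ l → l ≤ k → (l, j) ∈ P

/-- Column convexity of a collection of cells. -/
def ColConvex (P : Finset Pt) : Prop :=
  ∀ i j k : ℕ, (i, j) ∈ P → (i, k) ∈ P → ∀ l, j ≤ l → l ≤ k → (i, l) ∈ P

/-- `{(r,j),(r+1,j)}` is a horizontal edge of a cell of `P`. -/
def HEdge (P : Finset Pt) (r j : ℕ) : Prop :=
  (r, j) ∈ P ∨ (0 < j ∧ (r, j - 1) ∈ P)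

/-- `{(i,r),(i,r+1)}` is a vertical edge of a cell of `P`. -/
def VEdge (P : Finset Pt) (i r : ℕ) : Prop :=
  (i, r) ∈ P ∨ (0 < i ∧ (i - 1, r) ∈ P)

/-- `[(i,j),(k,j)]` is a maximal horizontal edge interval of `P`. -/
def MaxHInterval (P : Finset Pt) (i k j : ℕ) : Prop :=
  i < k ∧ (∀ r, i ≤ r → r < k → HEdge P r j) ∧
  ∀ i' k', i' < k' → (∀ r, i' ≤ r → r < k' → HEdge P r j) → i' ≤ i → k ≤ k' →
    i' = i ∧ k' = k

/-- `[(i,j),(i,l)]` is a maximal vertical edge interval of `P`. -/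
def MaxVInterval (P : Finset Pt) (i j l : ℕ) : Prop :=
  j < l ∧ (∀ r, j ≤ r → r < l → VEdge P i r) ∧
  ∀ j' l', j' < l' → (∀ r, j' ≤ r → r < l' → VEdge P i r) → j' ≤ j → l ≤ l' →
    j' = j ∧ l' = l

/-- The minima of the maximal horizontal edge intervals of `P`. -/
def HMins (P : Finset Pt) : Set Pt := {a | ∃ k, MaxHInterval P a.1 k a.2}

/-- The minima of the maximal vertical edge intervals of `P`. -/
def VMins (P : Finset Pt) : Set Pt := {a | ∃ l, MaxVInterval P a.1 a.2 l}

lemma nepath_fst_bound {k : ℕ} {f : ℕ → Pt} (hf : IsNEPath k f) :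
    ∀ t m, m + t ≤ k → (f m).1 ≤ (f (m + t)).1 ∧ (f (m + t)).1 ≤ (f m).1 + t := by
  intro t
  induction t with
  | zero => intro m _; simp
  | succ n ih =>
    intro m hm
    obtain ⟨h1, h2⟩ := ih m (by omega)
    rcases hf.2 (m + n) (by omega) with h | h <;>
      · rw [show m + (n + 1) = (m + n) + 1 by ring, h]
        simp only [Prod.fst_add]
        omega

lemma nepath_sum {k : ℕ} {f : ℕ → Pt} (hf : IsNEPath k f) :
    ∀ m ≤ k, (f m).1 + (f m).2 = m := by
  intro m
  induction m with
  | zero => intro _; simp [hf.1]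
  | succ n ih =>
    intro hm
    have h := ih (by omega)
    rcases hf.2 n (by omega) with h' | h' <;>
      · rw [h']
        simp only [Prod.fst_add, Prod.snd_add]
        omega

lemma para_rect {P : Finset Pt} (hP : IsParaPoly P) :
    ∀ i j s t : ℕ, (i, j) ∈ P → (s, t) ∈ P → i ≤ s → t ≤ j →
      intervalCells (i, t) (s + 1, j + 1) ⊆ P := by
  obtain ⟨k, u, l, hk, hu, hl, hend, _, _, _, hiff⟩ := hP
  intro i j s t hij hst his htj
  have Hij := (hiff (i, j)).mp hij
  have Hst := (hiff (s, t)).mp hst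
  have hv1 : (u (i + j + 1)).1 ≤ i := by
    rw [show i + j + 1 = i + (j + 1) by ring]
    exact (Hij (i, j + 1) (by simp [cellVerts])).2.1
  have hv2 : i + j + 2 ≤ k := by
    have h := (Hij (i + 1, j + 1) (by simp [cellVerts])).1
    simp only at h; omega
  have hv3 : s + 1 ≤ (l (s + t + 1)).1 := by
    rw [show s + t + 1 = (s + 1) + t by ring]
    exact (Hst (s + 1, t) (by simp [cellVerts])).2.2
  have hv4 : s + t + 2 ≤ k := by
    have h := (Hst (s + 1, t + 1) (by simp [cellVerts])).1
    simp only at h; omega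
  have hK : s + j + 2 ≤ k := by
    have e1 := nepath_sum hu k le_rfl
    have e2 := nepath_sum hu (i + j + 1) (by omega)
    have m1 := nepath_fst_bound hu (k - (i + j + 1)) (i + j + 1) (by omega)
    rw [show i + j + 1 + (k - (i + j + 1)) = k by omega] at m1
    have m2 := nepath_fst_bound hl (k - (s + t + 1)) (s + t + 1) (by omega)
    rw [show s + t + 1 + (k - (s + t + 1)) = k by omega] at m2
    have hend' : (u k).1 = (l k).1 := by rw [hend]
    omega
  have main : ∀ p q : ℕ, i ≤ p → p ≤ s + 1 → t ≤ q → q ≤ j + 1 →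
      p + q ≤ k ∧ (u (p + q)).1 ≤ p ∧ p ≤ (l (p + q)).1 := by
    intro p q hp1 hp2 hq1 hq2
    have hpq : p + q ≤ k := by omega
    refine ⟨hpq, ?_, ?_⟩
    · rcases le_total (p + q) (i + j + 1) with h | h
      · have m := nepath_fst_bound hu ((i + j + 1) - (p + q)) (p + q) (by omega)
        rw [show p + q + ((i + j + 1) - (p + q)) = i + j + 1 by omega] at m
        omega
      · have m := nepath_fst_bound hu ((p + q) - (i + j + 1)) (i + j + 1) (by omega)
        rw [show i + j + 1 + ((p + q) - (i + j + 1)) = p + q by omega] at m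
        omega
    · rcases le_total (p + q) (s + t + 1) with h | h
      · have m := nepath_fst_bound hl ((s + t + 1) - (p + q)) (p + q) (by omega)
        rw [show p + q + ((s + t + 1) - (p + q)) = s + t + 1 by omega] at m
        omega
      · have m := nepath_fst_bound hl ((p + q) - (s + t + 1)) (s + t + 1) (by omega)
        rw [show s + t + 1 + ((p + q) - (s + t + 1)) = p + q by omega] at m
        omega
  intro c hc
  obtain ⟨x, y⟩ := c
  simp only [intervalCells, Finset.mem_product, Finset.mem_Ico] at hc
  refine (hiff (x, y)).mpr ?_
  intro v hv
  simp only [cellVerts, Finset.mem_insert, Finset.mem_singleton] at hv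
  rcases hv with rfl | rfl | rfl | rfl
  · exact main x y (by omega) (by omega) (by omega) (by omega)
  · exact main (x + 1) y (by omega) (by omega) (by omega) (by omega)
  · exact main x (y + 1) (by omega) (by omega) (by omega) (by omega)
  · exact main (x + 1) (y + 1) (by omega) (by omega) (by omega) (by omega)

lemma switch_exists {P : Finset Pt}
    (hrect : ∀ i j s t : ℕ, (i, j) ∈ P → (s, t) ∈ P → i ≤ s → t ≤ j →
      intervalCells (i, t) (s + 1, j + 1) ⊆ P)
    {F : Finset Pt} (hF : NonAttacking P F)
    {i j s t : ℕ} (ha : (i, j) ∈ F) (hb : (s, t) ∈ F) (h1 : i < s) (h2 : t < j) :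
    ∃ G : Finset Pt, NonAttacking P G ∧ G.card = F.card ∧
      (∑ x ∈ F, x.1 * x.2) < (∑ x ∈ G, x.1 * x.2) ∧ SwitchStep P F G := by
  have hsub := hrect i j s t (hF.1 ha) (hF.1 hb) h1.le h2.le
  have hit : (i, t) ∈ P := hsub (by
    simp only [intervalCells, Finset.mem_product, Finset.mem_Ico]; omega)
  have hsj : (s, j) ∈ P := hsub (by
    simp only [intervalCells, Finset.mem_product, Finset.mem_Ico]; omega)
  have hitF : (i, t) ∉ F := fun h =>
    (hF.2 _ h _ ha (by simp only [ne_eq, Prod.mk.injEq]; omega)).1 rfl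
  have hsjF : (s, j) ∉ F := fun h =>
    (hF.2 _ h _ hb (by simp only [ne_eq, Prod.mk.injEq]; omega)).1 rfl
  have hne : ((i, j) : Pt) ≠ (s, t) := by simp only [ne_eq, Prod.mk.injEq]; omega
  have hne2 : ((i, t) : Pt) ≠ (s, j) := by simp only [ne_eq, Prod.mk.injEq]; omega
  have hDF : ({(i, j), (s, t)} : Finset Pt) ⊆ F := by
    simp [Finset.insert_subset_iff, ha, hb]
  have hdisj : Disjoint (F \ {(i, j), (s, t)}) ({(i, t), (s, j)} : Finset Pt) := by
    rw [Finset.disjoint_right]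
    intro x hx hx'
    simp only [Finset.mem_insert, Finset.mem_singleton] at hx
    rcases hx with rfl | rfl
    · exact hitF (Finset.mem_sdiff.mp hx').1
    · exact hsjF (Finset.mem_sdiff.mp hx').1
  refine ⟨F \ {(i, j), (s, t)} ∪ {(i, t), (s, j)}, ⟨?_, ?_⟩, ?_, ?_, ?_⟩
  · intro x hx
    rcases Finset.mem_union.mp hx with h | h
    · exact hF.1 (Finset.mem_sdiff.mp h).1
    · simp only [Finset.mem_insert, Finset.mem_singleton] at h
      rcases h with rfl | rfl
      exacts [hit, hsj]
  · have step : ∀ a ∈ F \ {((i, j) : Pt), (s, t)},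
        ∀ b ∈ ({((i, t) : Pt), (s, j)} : Finset Pt), a.1 ≠ b.1 ∧ a.2 ≠ b.2 := by
      intro a haF b hbN
      obtain ⟨haF', haD⟩ := Finset.mem_sdiff.mp haF
      simp only [Finset.mem_insert, Finset.mem_singleton] at haD hbN
      push_neg at haD
      have r1 := hF.2 _ haF' _ ha haD.1
      have r2 := hF.2 _ haF' _ hb haD.2
      rcases hbN with rfl | rfl
      · exact ⟨r1.1, r2.2⟩
      · exact ⟨r2.1, r1.2⟩
    intro a haG b hbG hab
    rcases Finset.mem_union.mp haG with haF | haN <;>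
      rcases Finset.mem_union.mp hbG with hbF | hbN
    · exact hF.2 _ (Finset.mem_sdiff.mp haF).1 _ (Finset.mem_sdiff.mp hbF).1 hab
    · exact step a haF b hbN
    · have := step b hbF a haN
      exact ⟨this.1.symm, this.2.symm⟩
    · simp only [Finset.mem_insert, Finset.mem_singleton] at haN hbN
      rcases haN with rfl | rfl <;> rcases hbN with rfl | rfl
      · exact absurd rfl hab
      · exact ⟨show i ≠ s by omega, show t ≠ j by omega⟩
      · exact ⟨show s ≠ i by omega, show j ≠ t by omega⟩
      · exact absurd rfl hab
  · rw [Finset.card_union_of_disjoint hdisj, Finset.card_sdiff_of_subset hDF,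
      Finset.card_pair hne, Finset.card_pair hne2]
    have := Finset.card_le_card hDF
    rw [Finset.card_pair hne] at this
    omega
  · rw [Finset.sum_union hdisj]
    have e1 : (∑ x ∈ F, x.1 * x.2)
        = (∑ x ∈ F \ {((i, j) : Pt), (s, t)}, x.1 * x.2)
          + ∑ x ∈ ({((i, j) : Pt), (s, t)} : Finset Pt), x.1 * x.2 :=
      (Finset.sum_sdiff hDF).symm
    rw [e1, Finset.sum_pair hne, Finset.sum_pair hne2]
    simp only [Prod.fst, Prod.snd]
    have : i * j + s * t < i * t + s * j := by nlinarith
    omega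
  · refine ⟨(i, t), (s + 1, j + 1), ⟨show i < s + 1 by omega, show t < j + 1 by omega,
      hsub⟩, Or.inr ⟨?_, ?_, ?_⟩⟩
    · show ((i, j + 1 - 1) : Pt) ∈ F
      simpa using ha
    · show ((s + 1 - 1, t) : Pt) ∈ F
      simpa using hb
    · show _ = F \ {((i, j + 1 - 1) : Pt), (s + 1 - 1, t)} ∪ {(i, t), (s + 1 - 1, j + 1 - 1)}
      norm_num

lemma key_induct {P : Finset Pt}
    (hrect : ∀ i j s t : ℕ, (i, j) ∈ P → (s, t) ∈ P → i ≤ s → t ≤ j →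
      intervalCells (i, t) (s + 1, j + 1) ⊆ P) :
    ∀ n (F : Finset Pt), NonAttacking P F →
      (∑ x ∈ P, x.1 * x.2) - (∑ x ∈ F, x.1 * x.2) ≤ n →
      ∃ G : Finset Pt, NonAttacking P G ∧ G.card = F.card ∧
        (∀ a ∈ G, ∀ b ∈ G, a ≠ b →
          (a.1 < b.1 ∧ a.2 < b.2) ∨ (b.1 < a.1 ∧ b.2 < a.2)) ∧
        Relation.EqvGen (SwitchStep P) F G := by
  intro n
  induction n with
  | zero =>
    intro F hF hm
    by_cases hinv : ∃ a ∈ F, ∃ b ∈ F, a.1 < b.1 ∧ b.2 < a.2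
    · obtain ⟨⟨i, j⟩, haF, ⟨s, t⟩, hbF, hab1, hab2⟩ := hinv
      obtain ⟨G', hG'na, _, hG'sum, _⟩ := switch_exists hrect hF haF hbF hab1 hab2
      have hGP : (∑ x ∈ G', x.1 * x.2) ≤ ∑ x ∈ P, x.1 * x.2 :=
        Finset.sum_le_sum_of_subset hG'na.1
      exact absurd hGP (by omega)
    · push_neg at hinv
      refine ⟨F, hF, rfl, ?_, Relation.EqvGen.refl F⟩
      intro a haF b hbF hab
      have h1 := hF.2 a haF b hbF hab
      have ha' := hinv a haF b hbF
      have hb' := hinv b hbF a haF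
      omega
  | succ n ih =>
    intro F hF hm
    by_cases hinv : ∃ a ∈ F, ∃ b ∈ F, a.1 < b.1 ∧ b.2 < a.2
    · obtain ⟨⟨i, j⟩, haF, ⟨s, t⟩, hbF, hab1, hab2⟩ := hinv
      obtain ⟨G', hG'na, hG'card, hG'sum, hG'step⟩ :=
        switch_exists hrect hF haF hbF hab1 hab2
      have hGP : (∑ x ∈ G', x.1 * x.2) ≤ ∑ x ∈ P, x.1 * x.2 :=
        Finset.sum_le_sum_of_subset hG'na.1
      obtain ⟨G, g1, g2, g3, g4⟩ := ih G' hG'na (by omega)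
      exact ⟨G, g1, g2.trans hG'card, g3,
        Relation.EqvGen.trans _ _ _ (Relation.EqvGen.rel _ _ hG'step) g4⟩
    · push_neg at hinv
      refine ⟨F, hF, rfl, ?_, Relation.EqvGen.refl F⟩
      intro a haF b hbF hab
      have h1 := hF.2 a haF b hbF hab
      have ha' := hinv a haF b hbF
      have hb' := hinv b hbF a haF
      omega

-- STATEMENT 7
theorem stmt7 (P : Finset Pt) (hP : IsParaPoly P) (F : Finset Pt)
    (hF : NonAttacking P F) :
    ∃ G : Finset Pt, NonAttacking P G ∧ G.card = F.card ∧
      (∀ a ∈ G, ∀ b ∈ G, a ≠ b →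
        (a.1 < b.1 ∧ a.2 < b.2) ∨ (b.1 < a.1 ∧ b.2 < a.2)) ∧
      Relation.EqvGen (SwitchStep P) F G := by
  obtain ⟨G, g1, g2, g3, g4⟩ := key_induct (para_rect hP) (∑ x ∈ P, x.1 * x.2) F hF
    (Nat.sub_le _ _)
  exact ⟨G, g1, g2, g3, g4⟩
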